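/- Composing the partition lemma with the tree-evaluation bound: if there is an algorithm solving tree evaluation of height h, arity 2, and value size b in space O(h·log b + b), then every size-s Boolean circuit with fan-in 2 can be evaluated in space O(√(s·log s)) (choose b = √(s·log s), giving h = O(s/b) = O(√(s/log s)) and total space O((s/b)·log b + b) = O(√(s·log s))). -/

import Mathlib

/-- Arithmetic of composing the partition lemma with the Cook–Mertz bound:
for `b = ⌈√(s·log₂ s)⌉` and `h = ⌈2s/b⌉`, we have `h·log₂ b + b = O(√(s·log₂ s))`. -/
theorem stmt17 : ∃ C : ℝ, 0 < C ∧ ∀ s : ℕ, 2 ≤ s →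
    ∀ b h : ℕ, b = ⌈Real.sqrt (s * Real.logb 2 s)⌉₊ → h = ⌈(2 * (s : ℝ)) / (b : ℝ)⌉₊ →
    (h : ℝ) * Real.logb 2 (b : ℝ) + (b : ℝ) ≤ C * Real.sqrt (s * Real.logb 2 s) := by
  refine ⟨8, by norm_num, ?_⟩
  intro s hs b h hb hh
  have hs2 : (2:ℝ) ≤ (s:ℝ) := by exact_mod_cast hs
  have hs0 : (0:ℝ) < s := by linarith
  set L := Real.logb 2 (s:ℝ) with hLdef
  have hL1 : 1 ≤ L := by
    have : Real.logb 2 2 ≤ Real.logb 2 (s:ℝ) :=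
      Real.logb_le_logb_of_le (by norm_num) (by norm_num) hs2
    simpa [Real.logb_self_eq_one] using this
  have hLs : L ≤ (s:ℝ) := by
    rw [hLdef, Real.logb_le_iff_le_rpow (by norm_num) hs0]
    rw [Real.rpow_natCast]
    exact_mod_cast (Nat.lt_two_pow_self (n := s)).le
  set t := Real.sqrt ((s:ℝ) * L) with htdef
  have hsL1 : (1:ℝ) ≤ (s:ℝ) * L := by nlinarith
  have ht1 : (1:ℝ) ≤ t := by
    rw [htdef]
    nlinarith [Real.sq_sqrt (le_trans zero_le_one hsL1), Real.sqrt_nonneg ((s:ℝ)*L)]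
  have ht0 : (0:ℝ) < t := by linarith
  have htsq : t * t = (s:ℝ) * L := Real.mul_self_sqrt (by linarith)
  have hts : t ≤ (s:ℝ) := by nlinarith
  have htb : t ≤ (b:ℝ) := hb ▸ Nat.le_ceil t
  have hb0 : (0:ℝ) < (b:ℝ) := lt_of_lt_of_le ht0 htb
  have hbub : (b:ℝ) < t + 1 := by
    rw [hb]; exact Nat.ceil_lt_add_one (by linarith)
  have hb2t : (b:ℝ) ≤ 2 * t := by linarith
  have hbs2 : (b:ℝ) ≤ (s:ℝ)^2 := by nlinarith
  have hlogb : Real.logb 2 (b:ℝ) ≤ 2 * L := by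
    have h1 : Real.logb 2 (b:ℝ) ≤ Real.logb 2 ((s:ℝ)^2) :=
      Real.logb_le_logb_of_le (by norm_num) hb0 hbs2
    have h2 : Real.logb 2 ((s:ℝ)^2) = 2 * L := by
      rw [Real.logb_pow]; push_cast; ring
    linarith
  have hlogb0 : 0 ≤ Real.logb 2 (b:ℝ) := Real.logb_nonneg (by norm_num) (by
    have : (1:ℝ) ≤ t := ht1
    linarith)
  have hhub : (h:ℝ) < 2 * (s:ℝ) / (b:ℝ) + 1 := by
    rw [hh]
    exact Nat.ceil_lt_add_one (by positivity)
  have hdiv : 2 * (s:ℝ) / (b:ℝ) ≤ 2 * (s:ℝ) / t :=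
    div_le_div_of_nonneg_left (by linarith) ht0 htb
  have hst : 2 * (s:ℝ) / t * L = 2 * t := by
    rw [div_mul_eq_mul_div, div_eq_iff (ne_of_gt ht0)]
    nlinarith [htsq]
  have hkey : (h:ℝ) * Real.logb 2 (b:ℝ) ≤ (2 * (s:ℝ) / t + 1) * (2 * L) := by
    have hh' : (h:ℝ) ≤ 2 * (s:ℝ) / t + 1 := by linarith
    have hhn : (0:ℝ) ≤ (h:ℝ) := Nat.cast_nonneg h
    exact mul_le_mul hh' hlogb (by positivity) (by positivity)
  have hexp : (2 * (s:ℝ) / t + 1) * (2 * L) = 4 * t + 2 * L := by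
    have e : (2 * (s:ℝ) / t + 1) * (2 * L) = 2 * (2 * (s:ℝ) / t * L) + 2 * L := by ring
    rw [e, hst]; ring
  have hLt : L ≤ t := by nlinarith
  calc (h:ℝ) * Real.logb 2 (b:ℝ) + (b:ℝ)
      ≤ (4 * t + 2 * L) + 2 * t := by rw [← hexp]; linarith
    _ ≤ 8 * t := by linarith
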